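/- Explicit formula for the graded Berezinian (Proposition): Let B be a map satisfying the graded-Berezinian axioms (0), (1), (2) with respect to D_E and D_O. Then for every invertible X ∈ M⁰(w): the submatrix 𝒳₂₂ is an invertible matrix over A, D_O(𝒳₂₂) is an invertible element of A, and B(X) = D_E(𝒳₁₁ − 𝒳₁₂ * 𝒳₂₂⁻¹ * 𝒳₂₁) * (D_O(𝒳₂₂))⁻¹, where 𝒳₂₂⁻¹ denotes the inverse of the O×O submatrix and 𝒳₁₁ − 𝒳₁₂ * 𝒳₂₂⁻¹ * 𝒳₂₁ is a degree-zero graded matrix for the weight map w restricted to E. -/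

import Mathlib

open Matrix

abbrev Gamma (n : ℕ) := Fin n → ZMod 2

def gpair {n : ℕ} (γ δ : Gamma n) : ZMod 2 := ∑ i, γ i * δ i

def gsign {n : ℕ} (γ δ : Gamma n) : ℤ := if gpair γ δ = 1 then -1 else 1

def GammaEven {n : ℕ} (γ : Gamma n) : Prop := gpair γ γ = 0

instance {n : ℕ} : DecidablePred (GammaEven (n := n)) := fun γ =>
  inferInstanceAs (Decidable (gpair γ γ = 0))

/-- `Γ`-graded commutativity of the graded algebra `A`:
`b * a = sign(γ,δ) • (a * b)` for homogeneous `a, b`. -/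
def GradedComm {n : ℕ} {K A : Type*} [Field K] [Ring A] [Algebra K A]
    (𝒜 : Gamma n → Submodule K A) : Prop :=
  ∀ (γ δ : Gamma n) (a b : A), a ∈ 𝒜 γ → b ∈ 𝒜 δ → b * a = gsign γ δ • (a * b)

/-- `X ∈ M^x(w)` : the matrix `X` is homogeneous of degree `x` w.r.t. the weight map `w`. -/
def Mdeg {n : ℕ} {K A : Type*} [Field K] [Ring A] [Algebra K A]
    (𝒜 : Gamma n → Submodule K A) {ι : Type*} (w : ι → Gamma n) (x : Gamma n)
    (X : Matrix ι ι A) : Prop :=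
  ∀ α β, X α β ∈ 𝒜 (w α + w β + x)

/-- `X ∈ M⁰(w)` : the matrix `X` is homogeneous of degree `0` w.r.t. the weight map `w`. -/
def Mdeg0 {n : ℕ} {K A : Type*} [Field K] [Ring A] [Algebra K A]
    (𝒜 : Gamma n → Submodule K A) {ι : Type*} (w : ι → Gamma n)
    (X : Matrix ι ι A) : Prop :=
  ∀ α β, X α β ∈ 𝒜 (w α + w β)

/-- Leibniz determinant over a (not necessarily commutative) ring, with the product
taken in the order given by the linear order on the index type. -/
def listDet {ι : Type*} [Fintype ι] [LinearOrder ι] {A : Type*} [Ring A]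
    (X : Matrix ι ι A) : A :=
  ∑ σ : Equiv.Perm ι, (Equiv.Perm.sign σ : ℤ) •
    ((Finset.sort Finset.univ (· ≤ ·)).map fun i => X (σ i) i).prod

/-- The product over the values `γ` in the range of `v` (ordered by `lo`) of the ordinary
determinants of the diagonal blocks `{α | v α = γ}` of `X`. -/
def detProd {n : ℕ} (lo : LinearOrder (Gamma n)) {ι : Type*} [Fintype ι] [LinearOrder ι]
    {A : Type*} [Ring A] (v : ι → Gamma n) (X : Matrix ι ι A) : A :=
  letI : LinearOrder (Gamma n) := lo
  ((Finset.sort (Finset.image v Finset.univ) (· ≤ ·)).map fun γ =>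
    listDet (Matrix.of fun a b : {α : ι // v α = γ} => X a.1 b.1)).prod

/-- The graded-determinant axioms for a map `D` on degree-zero graded matrices with weight
map `v` and a fixed linear order `lo` on `Γ`: `D` is valued in `𝒜 0`, is multiplicative,
equals the product of the ordinary block determinants on block-diagonal matrices, and
equals `1` on block-unitriangular matrices. -/
def DetAxioms {n : ℕ} {K A : Type*} [Field K] [Ring A] [Algebra K A]
    (𝒜 : Gamma n → Submodule K A) (lo : LinearOrder (Gamma n))
    {ι : Type*} [Fintype ι] [LinearOrder ι] (v : ι → Gamma n)
    (D : Matrix ι ι A → A) : Prop :=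
  (∀ X, Mdeg0 𝒜 v X → D X ∈ 𝒜 0) ∧
  (∀ X Y, Mdeg0 𝒜 v X → Mdeg0 𝒜 v Y → D (X * Y) = D X * D Y) ∧
  (∀ X, Mdeg0 𝒜 v X → (∀ α β, v α ≠ v β → X α β = 0) → D X = detProd lo v X) ∧
  (∀ X, Mdeg0 𝒜 v X → (∀ α β, v α = v β → X α β = if α = β then (1 : A) else 0) →
    ((∀ α β, lo.lt (v α) (v β) → X α β = 0) ∨ (∀ α β, lo.lt (v β) (v α) → X α β = 0)) →
    D X = 1)

/-- The even–even block `𝒳₁₁` of a graded matrix. -/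
def blkEE {n N : ℕ} {A : Type*} (w : Fin N → Gamma n) (X : Matrix (Fin N) (Fin N) A) :
    Matrix {α : Fin N // GammaEven (w α)} {α : Fin N // GammaEven (w α)} A :=
  X.submatrix Subtype.val Subtype.val

/-- The even–odd block `𝒳₁₂` of a graded matrix. -/
def blkEO {n N : ℕ} {A : Type*} (w : Fin N → Gamma n) (X : Matrix (Fin N) (Fin N) A) :
    Matrix {α : Fin N // GammaEven (w α)} {α : Fin N // ¬ GammaEven (w α)} A :=
  X.submatrix Subtype.val Subtype.val

/-- The odd–even block `𝒳₂₁` of a graded matrix. -/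
def blkOE {n N : ℕ} {A : Type*} (w : Fin N → Gamma n) (X : Matrix (Fin N) (Fin N) A) :
    Matrix {α : Fin N // ¬ GammaEven (w α)} {α : Fin N // GammaEven (w α)} A :=
  X.submatrix Subtype.val Subtype.val

/-- The odd–odd block `𝒳₂₂` of a graded matrix. -/
def blkOO {n N : ℕ} {A : Type*} (w : Fin N → Gamma n) (X : Matrix (Fin N) (Fin N) A) :
    Matrix {α : Fin N // ¬ GammaEven (w α)} {α : Fin N // ¬ GammaEven (w α)} A :=
  X.submatrix Subtype.val Subtype.val

/-- The weight map `w` restricted to the even index set. -/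
def wE {n N : ℕ} (w : Fin N → Gamma n) : {α : Fin N // GammaEven (w α)} → Gamma n :=
  fun α => w α.1

/-- The weight map `w` restricted to the odd index set. -/
def wO {n N : ℕ} (w : Fin N → Gamma n) : {α : Fin N // ¬ GammaEven (w α)} → Gamma n :=
  fun α => w α.1

/-- The graded-Berezinian axioms for a map `B` on invertible degree-zero graded matrices,
relative to graded determinants `DE` and `DO` on the even and odd blocks:
`B` is valued in `𝒜 0`, is multiplicative, satisfies `B(X) * DO(𝒳₂₂) = DE(𝒳₁₁)` on
block-diagonal matrices (with `DO(𝒳₂₂)` invertible), and equals `1` on block-unitriangular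
matrices. -/
def BerAxioms {n N : ℕ} {K A : Type*} [Field K] [Ring A] [Algebra K A]
    (𝒜 : Gamma n → Submodule K A) (w : Fin N → Gamma n)
    (DE : Matrix {α : Fin N // GammaEven (w α)} {α : Fin N // GammaEven (w α)} A → A)
    (DO : Matrix {α : Fin N // ¬ GammaEven (w α)} {α : Fin N // ¬ GammaEven (w α)} A → A)
    (B : Matrix (Fin N) (Fin N) A → A) : Prop :=
  (∀ X, Mdeg0 𝒜 w X → IsUnit X → B X ∈ 𝒜 0) ∧
  (∀ X Y, Mdeg0 𝒜 w X → IsUnit X → Mdeg0 𝒜 w Y → IsUnit Y → B (X * Y) = B X * B Y) ∧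
  (∀ X, Mdeg0 𝒜 w X → IsUnit X → blkEO w X = 0 → blkOE w X = 0 →
    IsUnit (DO (blkOO w X)) ∧ B X * DO (blkOO w X) = DE (blkEE w X)) ∧
  (∀ X, Mdeg0 𝒜 w X → IsUnit X → blkEE w X = 1 → blkOO w X = 1 →
    (blkEO w X = 0 ∨ blkOE w X = 0) → B X = 1)
section BerAux

open Matrix

variable {n : ℕ} {K A : Type*} [Field K] [CharZero K] [Ring A] [Algebra K A]

lemma Gamma.add_self (γ : Gamma n) : γ + γ = 0 := by
  funext i
  show γ i + γ i = 0
  have h2 : (2 : ZMod 2) = 0 := rfl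
  calc γ i + γ i = 2 * γ i := (two_mul _).symm
    _ = 0 := by rw [h2, zero_mul]

lemma gpair_add_self (γ δ : Gamma n) : gpair (γ + δ) (γ + δ) = gpair γ γ + gpair δ δ := by
  unfold gpair
  rw [← Finset.sum_add_distrib]
  refine Finset.sum_congr rfl fun i _ => ?_
  show (γ i + δ i) * (γ i + δ i) = γ i * γ i + δ i * δ i
  exact (by decide : ∀ a b : ZMod 2, (a + b) * (a + b) = a * a + b * b) (γ i) (δ i)

lemma odd_of_ne {γ δ : Gamma n} (h : ¬ (GammaEven γ ↔ GammaEven δ)) : ¬ GammaEven (γ + δ) := by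
  unfold GammaEven at *
  rw [gpair_add_self]
  exact (by decide : ∀ a b : ZMod 2, ¬(a = 0 ↔ b = 0) → ¬(a + b = 0)) _ _ h

variable (𝒜 : Gamma n → Submodule K A) [GradedAlgebra 𝒜]

lemma odd_sq (hcomm : GradedComm 𝒜) {γ : Gamma n} (hγ : ¬ GammaEven γ)
    {a : A} (ha : a ∈ 𝒜 γ) : a * a = 0 := by
  have h := hcomm γ γ a a ha ha
  have h1 : gpair γ γ = 1 := (by decide : ∀ x : ZMod 2, x ≠ 0 → x = 1) _ hγ
  rw [gsign, if_pos h1] at h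
  have h2 : (2 : K) • (a * a) = 0 := by
    rw [two_smul]
    nth_rewrite 1 [h]
    simp
  have h3 : a * a = (2 : K)⁻¹ • ((2 : K) • (a * a)) := by
    rw [smul_smul, inv_mul_cancel₀ (two_ne_zero), one_smul]
  rw [h3, h2, smul_zero]

lemma odd_conj (hcomm : GradedComm 𝒜) {γ : Gamma n} (hγ : ¬ GammaEven γ)
    {a : A} (ha : a ∈ 𝒜 γ) (x : A) : a * x * a = 0 := by
  classical
  have hx : ∑ δ : Gamma n, ((DirectSum.decompose 𝒜 x) δ : A) = x := by
    conv_rhs => rw [← DirectSum.sum_support_decompose 𝒜 x]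
    exact (Finset.sum_subset (Finset.subset_univ _) fun δ _ hδ => by
      rw [DFinsupp.notMem_support_iff.mp hδ, ZeroMemClass.coe_zero]).symm
  rw [← hx, Finset.mul_sum, Finset.sum_mul]
  refine Finset.sum_eq_zero fun δ _ => ?_
  have hmem := SetLike.coe_mem ((DirectSum.decompose 𝒜 x) δ)
  have h := hcomm γ δ a _ ha hmem
  calc a * ↑((DirectSum.decompose 𝒜 x) δ) * a
      = a * (↑((DirectSum.decompose 𝒜 x) δ) * a) := by rw [mul_assoc]
    _ = gsign γ δ • (a * (a * ↑((DirectSum.decompose 𝒜 x) δ))) := by rw [h, mul_smul_comm]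
    _ = gsign γ δ • (a * a * ↑((DirectSum.decompose 𝒜 x) δ)) := by rw [mul_assoc]
    _ = 0 := by rw [odd_sq 𝒜 hcomm hγ ha, zero_mul, smul_zero]

end BerAux
section BerAux2

set_option linter.unusedSectionVars false

variable {n : ℕ} {K A : Type*} [Field K] [CharZero K] [Ring A] [Algebra K A]

/-- The two-sided ideal (as a K-submodule) generated by `a`. -/
def Jd (K : Type*) [Field K] {A : Type*} [Ring A] [Algebra K A] (a : A) : Submodule K A :=
  ⊤ * Submodule.span K {a} * ⊤

lemma mem_Jd (a x y : A) : x * a * y ∈ Jd K a :=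
  Submodule.mul_mem_mul
    (Submodule.mul_mem_mul Submodule.mem_top (Submodule.subset_span (Set.mem_singleton a)))
    Submodule.mem_top


lemma subzero_le (P : Submodule K A) : (0 : Submodule K A) ≤ P := by
  rw [Submodule.zero_eq_bot]; exact bot_le

lemma Jd_sandwich {a : A} (h : ∀ x, a * x * a = 0) (C : Submodule K A) :
    Jd K a * C * Jd K a = 0 := by
  have key : ∀ D : Submodule K A, Submodule.span K {a} * D * Submodule.span K {a} = 0 := by
    intro D
    rw [Submodule.zero_eq_bot, eq_bot_iff]
    refine Submodule.mul_le.mpr fun u hu v hv => ?_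
    obtain ⟨c, rfl⟩ := Submodule.mem_span_singleton.mp hv
    have hu0 : u * a = 0 := by
      have hle : Submodule.span K {a} * D ≤ LinearMap.ker (LinearMap.mulRight K a) := by
        refine Submodule.mul_le.mpr fun m hm d _ => ?_
        obtain ⟨e, rfl⟩ := Submodule.mem_span_singleton.mp hm
        simp only [LinearMap.mem_ker, LinearMap.mulRight_apply]
        rw [smul_mul_assoc, smul_mul_assoc, h, smul_zero]
      exact LinearMap.mem_ker.mp (hle hu)
    show u * (c • a) ∈ ⊥
    rw [mul_smul_comm, hu0, smul_zero]
    exact Submodule.zero_mem ⊥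
  have h2 : (⊤ : Submodule K A) * (Submodule.span K {a} * (⊤ * C * ⊤) * Submodule.span K {a}) * ⊤
      = 0 := by
    rw [key, mul_zero, zero_mul]
  calc Jd K a * C * Jd K a
      = (⊤ : Submodule K A) * (Submodule.span K {a} * (⊤ * C * ⊤) * Submodule.span K {a}) * ⊤ := by
        unfold Jd; simp only [mul_assoc]
    _ = 0 := h2

lemma pow_sum_bound (a b : Submodule K A) (h : ∀ C : Submodule K A, a * C * a = 0) :
    ∀ m : ℕ, (a + b) ^ m ≤ b ^ m + ∑ i ∈ Finset.range m, b ^ i * a * b ^ (m - 1 - i) := by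
  intro m
  induction m with
  | zero => simp
  | succ m IH =>
    have step : (a + b) ^ (m + 1)
        ≤ (b ^ m + ∑ i ∈ Finset.range m, b ^ i * a * b ^ (m - 1 - i)) * (a + b) := by
      rw [pow_succ]
      exact mul_le_mul' IH le_rfl
    refine step.trans ?_
    have e1 : b ^ m * a ≤ ∑ i ∈ Finset.range (m + 1), b ^ i * a * b ^ (m - i) := by
      have := Finset.single_le_sum (f := fun i => b ^ i * a * b ^ (m - i))
        (fun i _ => subzero_le _) (Finset.self_mem_range_succ m)
      simpa [Nat.sub_self, pow_zero, mul_one] using this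
    have e4 : (∑ i ∈ Finset.range m, b ^ i * a * b ^ (m - 1 - i)) * b
        ≤ ∑ i ∈ Finset.range (m + 1), b ^ i * a * b ^ (m - i) := by
      rw [Finset.sum_mul]
      refine le_trans (Finset.sum_le_sum (fun i hi => le_of_eq ?_))
        (Finset.sum_le_sum_of_subset_of_nonneg (Finset.range_subset_range.mpr (Nat.le_succ m))
          fun i _ _ => subzero_le _)
      have hi' : i < m := Finset.mem_range.mp hi
      rw [mul_assoc (b ^ i * a), ← pow_succ]
      congr 2
      omega
    have e3 : (∑ i ∈ Finset.range m, b ^ i * a * b ^ (m - 1 - i)) * a = 0 := by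
      rw [Finset.sum_mul]
      refine Finset.sum_eq_zero fun i _ => ?_
      rw [mul_assoc (b ^ i) a, mul_assoc, h, mul_zero]
    rw [add_mul, mul_add, mul_add]
    simp only [Nat.add_sub_cancel]
    rw [Submodule.add_eq_sup, Submodule.add_eq_sup, Submodule.add_eq_sup, Submodule.add_eq_sup]
    refine sup_le (sup_le ?_ ?_) (sup_le ?_ ?_)
    · exact le_sup_of_le_right e1
    · exact le_sup_of_le_left (le_of_eq (pow_succ b m).symm)
    · exact le_trans (le_of_eq e3) (subzero_le _)
    · exact le_sup_of_le_right e4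

lemma sum_Jd_nilpotent (s : Finset A) (hs : ∀ a ∈ s, ∀ x, a * x * a = 0) :
    ∃ m, 1 ≤ m ∧ (∑ a ∈ s, Jd K a) ^ m = 0 := by
  classical
  revert hs
  refine Finset.induction_on s ?_ ?_
  · intro _
    exact ⟨1, le_rfl, by simp⟩
  · intro a t ha IH hs
    obtain ⟨k, hk1, hk⟩ := IH (fun b hb => hs b (Finset.mem_insert_of_mem hb))
    have hsand := fun C => Jd_sandwich (K := K) (hs a (Finset.mem_insert_self a t)) C
    set b := ∑ x ∈ t, Jd K x with hb
    refine ⟨2 * k + 1, by omega, ?_⟩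
    rw [Finset.sum_insert ha]
    have hbz : ∀ j, k ≤ j → b ^ j = 0 := by
      intro j hj
      rw [show j = k + (j - k) by omega, pow_add, hk, zero_mul]
    have hle := pow_sum_bound (Jd K a) b hsand (2 * k + 1)
    have h1 : b ^ (2 * k + 1) = 0 := hbz _ (by omega)
    have h2 : ∑ i ∈ Finset.range (2 * k + 1), b ^ i * Jd K a * b ^ (2 * k + 1 - 1 - i) = 0 := by
      refine Finset.sum_eq_zero fun i hi => ?_
      rcases le_or_gt k i with h | h
      · rw [hbz i h, zero_mul, zero_mul]
      · rw [hbz (2 * k + 1 - 1 - i) (by omega), mul_zero]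
    rw [h1, h2, add_zero] at hle
    exact le_antisymm hle (subzero_le _)

lemma matrix_entries_pow {ι : Type*} [Fintype ι] [DecidableEq ι] (I : Submodule K A)
    (M : Matrix ι ι A) (hM : ∀ i j, M i j ∈ I) :
    ∀ m, 1 ≤ m → ∀ i j, (M ^ m) i j ∈ I ^ m := by
  intro m
  induction m with
  | zero => omega
  | succ m IH =>
    intro _ i j
    rcases Nat.eq_zero_or_pos m with rfl | hm
    · simpa [pow_one] using hM i j
    · rw [pow_succ, pow_succ, Matrix.mul_apply]
      exact Submodule.sum_mem _ fun c _ => Submodule.mul_mem_mul (IH hm i c) (hM c j)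

lemma matrix_nilpotent {ι : Type*} [Fintype ι] [DecidableEq ι] (I : Submodule K A)
    (hI : ∃ m, 1 ≤ m ∧ I ^ m = 0) (M : Matrix ι ι A) (hM : ∀ i j, M i j ∈ I) :
    IsNilpotent M := by
  obtain ⟨m, hm, h0⟩ := hI
  refine ⟨m, ?_⟩
  ext i j
  have hmem := matrix_entries_pow I M hM m hm i j
  rw [h0, Submodule.zero_eq_bot] at hmem
  simpa using (Submodule.mem_bot K).mp hmem

lemma isUnit_of_left_right {M : Type*} [Monoid M] {x l r : M}
    (hl : l * x = 1) (hr : x * r = 1) : IsUnit x := by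
  have hlr : l = r := by rw [← mul_one l, ← hr, ← mul_assoc, hl, one_mul]
  exact ⟨⟨x, r, hr, hlr ▸ hl⟩, rfl⟩

end BerAux2
section BerAux3

set_option linter.unusedSectionVars false

variable {n : ℕ} {K A : Type*} [Field K] [CharZero K] [Ring A] [Algebra K A]
variable (𝒜 : Gamma n → Submodule K A) [GradedAlgebra 𝒜]

lemma deg_cancel (x y z w : Gamma n) : (x + y) + (y + z + w) = x + z + w := by
  have h := Gamma.add_self y
  calc (x + y) + (y + z + w) = x + (y + y) + (z + w) := by abel
    _ = x + 0 + (z + w) := by rw [h]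
    _ = x + z + w := by abel

lemma deg_cancel2 (x y z : Gamma n) : (x + y) + (y + z) = x + z := by
  have h := Gamma.add_self y
  calc (x + y) + (y + z) = x + (y + y) + z := by abel
    _ = x + 0 + z := by rw [h]
    _ = x + z := by abel

lemma graded_mul {ι κ ρ : Type*} [Fintype κ] (u : ι → Gamma n) (v : κ → Gamma n)
    (t : ρ → Gamma n) {P : Matrix ι κ A} {Q : Matrix κ ρ A}
    (hP : ∀ a b, P a b ∈ 𝒜 (u a + v b)) (hQ : ∀ a b, Q a b ∈ 𝒜 (v a + t b)) :
    ∀ a b, (P * Q) a b ∈ 𝒜 (u a + t b) := by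
  intro a b
  rw [Matrix.mul_apply]
  refine Submodule.sum_mem _ fun c _ => ?_
  have hmem := SetLike.mul_mem_graded (hP a c) (hQ c b)
  rwa [deg_cancel2] at hmem

lemma Mdeg0_mul {ι : Type*} [Fintype ι] (v : ι → Gamma n) {P Q : Matrix ι ι A}
    (hP : Mdeg0 𝒜 v P) (hQ : Mdeg0 𝒜 v Q) : Mdeg0 𝒜 v (P * Q) :=
  graded_mul 𝒜 v v v hP hQ

lemma Mdeg0_one {ι : Type*} [DecidableEq ι] (v : ι → Gamma n) :
    Mdeg0 𝒜 v (1 : Matrix ι ι A) := by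
  intro a b
  by_cases h : a = b
  · subst h
    rw [Matrix.one_apply_eq, Gamma.add_self]
    exact SetLike.one_mem_graded 𝒜
  · rw [Matrix.one_apply_ne h]
    exact Submodule.zero_mem _

lemma sum_decompose (z : A) : ∑ η : Gamma n, ((DirectSum.decompose 𝒜 z) η : A) = z := by
  classical
  conv_rhs => rw [← DirectSum.sum_support_decompose 𝒜 z]
  exact (Finset.sum_subset (Finset.subset_univ _) fun δ _ hδ => by
    rw [DFinsupp.notMem_support_iff.mp hδ, ZeroMemClass.coe_zero]).symm

lemma decompose_unique {g : Gamma n → Gamma n} (hg : Function.Injective g)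
    (c : Gamma n → A) (hc : ∀ ξ, c ξ ∈ 𝒜 (g ξ)) (ξ₀ : Gamma n) :
    ((DirectSum.decompose 𝒜 (∑ ξ : Gamma n, c ξ)) (g ξ₀) : A) = c ξ₀ := by
  classical
  rw [DirectSum.decompose_sum, DFinsupp.finset_sum_apply, AddSubmonoidClass.coe_finset_sum]
  rw [Finset.sum_eq_single ξ₀]
  · exact DirectSum.decompose_of_mem_same 𝒜 (hc ξ₀)
  · exact fun ξ _ hξ => DirectSum.decompose_of_mem_ne 𝒜 (hc ξ) (fun h => hξ (hg h))
  · intro h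
    exact absurd (Finset.mem_univ ξ₀) h

lemma Mdeg0_ringInverse {ι : Type*} [Fintype ι] [DecidableEq ι] (v : ι → Gamma n)
    (Y : Matrix ι ι A) (hY : Mdeg0 𝒜 v Y) (hU : IsUnit Y) :
    Mdeg0 𝒜 v (Ring.inverse Y) := by
  classical
  set Z := Ring.inverse Y with hZdef
  have hYZ : Y * Z = 1 := Ring.mul_inverse_cancel Y hU
  have hZY : Z * Y = 1 := Ring.inverse_mul_cancel Y hU
  set Zc : Gamma n → Matrix ι ι A :=
    fun ξ => Matrix.of fun α β => ((DirectSum.decompose 𝒜 (Z α β)) (v α + v β + ξ) : A) with hZc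
  have hZcmem : ∀ ξ α β, Zc ξ α β ∈ 𝒜 (v α + v β + ξ) := fun ξ α β => SetLike.coe_mem _
  have hsum : ∑ ξ : Gamma n, Zc ξ = Z := by
    ext α β
    rw [Matrix.sum_apply]
    calc ∑ ξ : Gamma n, Zc ξ α β
        = ∑ ξ : Gamma n,
            ((DirectSum.decompose 𝒜 (Z α β)) ((Equiv.addLeft (v α + v β)) ξ) : A) := rfl
      _ = ∑ η : Gamma n, ((DirectSum.decompose 𝒜 (Z α β)) η : A) :=
          Fintype.sum_equiv (Equiv.addLeft (v α + v β)) _ _ (fun x => rfl)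
      _ = Z α β := sum_decompose 𝒜 _
  have hmulmem : ∀ ξ α β, (Y * Zc ξ) α β ∈ 𝒜 (v α + v β + ξ) := by
    intro ξ α β
    rw [Matrix.mul_apply]
    refine Submodule.sum_mem _ fun c _ => ?_
    have hmem := SetLike.mul_mem_graded (hY α c) (hZcmem ξ c β)
    rwa [deg_cancel] at hmem
  have key : ∀ ξ α β, (Y * Zc ξ) α β
      = ((DirectSum.decompose 𝒜 ((1 : Matrix ι ι A) α β)) (v α + v β + ξ) : A) := by
    intro ξ α β
    have hsum1 : ∑ ζ : Gamma n, (Y * Zc ζ) α β = (1 : Matrix ι ι A) α β := by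
      rw [← Matrix.sum_apply α β Finset.univ (fun ζ => Y * Zc ζ), ← Finset.mul_sum, hsum, hYZ]
    have huniq := decompose_unique 𝒜 (g := fun ζ => v α + v β + ζ)
      (fun _ _ h => by exact add_left_cancel h)
      (fun ζ => (Y * Zc ζ) α β) (fun ζ => hmulmem ζ α β) ξ
    rw [hsum1] at huniq
    exact huniq.symm
  have hz0 : Y * Zc 0 = 1 := by
    ext α β
    rw [key 0 α β]
    by_cases h : α = β
    · subst h
      rw [Matrix.one_apply_eq]
      have hdeg : v α + v α + 0 = 0 := by rw [Gamma.add_self, add_zero]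
      rw [hdeg, DirectSum.decompose_of_mem_same 𝒜 (SetLike.one_mem_graded 𝒜)]
    · rw [Matrix.one_apply_ne h, DirectSum.decompose_zero]
      simp
  have hZeq : Z = Zc 0 := by
    calc Z = Z * (Y * Zc 0) := by rw [hz0, mul_one]
      _ = (Z * Y) * Zc 0 := by rw [mul_assoc]
      _ = Zc 0 := by rw [hZY, one_mul]
  intro α β
  have hmem := hZcmem 0 α β
  rw [add_zero] at hmem
  rw [hZeq]
  exact hmem

end BerAux3
section BerAux4

set_option linter.unusedSectionVars false

variable {n N : ℕ} {K A : Type*} [Field K] [CharZero K] [Ring A] [Algebra K A]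

/-- The equivalence between `E ⊕ O` and `Fin N`. -/
def eS (w : Fin N → Gamma n) :
    {α : Fin N // GammaEven (w α)} ⊕ {α : Fin N // ¬ GammaEven (w α)} ≃ Fin N :=
  Equiv.sumCompl _

/-- Assemble a matrix from its four blocks. -/
def bigOf (w : Fin N → Gamma n)
    (P : Matrix {α : Fin N // GammaEven (w α)} {α : Fin N // GammaEven (w α)} A)
    (Q : Matrix {α : Fin N // GammaEven (w α)} {α : Fin N // ¬ GammaEven (w α)} A)
    (R : Matrix {α : Fin N // ¬ GammaEven (w α)} {α : Fin N // GammaEven (w α)} A)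
    (S : Matrix {α : Fin N // ¬ GammaEven (w α)} {α : Fin N // ¬ GammaEven (w α)} A) :
    Matrix (Fin N) (Fin N) A :=
  (Matrix.fromBlocks P Q R S).submatrix (eS w).symm (eS w).symm

variable (w : Fin N → Gamma n)

lemma eS_symm_of_pos (α : Fin N) (h : GammaEven (w α)) : (eS w).symm α = Sum.inl ⟨α, h⟩ :=
  Equiv.sumCompl_symm_apply_of_pos (p := fun α => GammaEven (w α)) h

lemma eS_symm_of_neg (α : Fin N) (h : ¬ GammaEven (w α)) : (eS w).symm α = Sum.inr ⟨α, h⟩ :=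
  Equiv.sumCompl_symm_apply_of_neg (p := fun α => GammaEven (w α)) h

lemma eS_symm_pos (α : {α : Fin N // GammaEven (w α)}) : (eS w).symm α.1 = Sum.inl α :=
  eS_symm_of_pos w α.1 α.2

lemma eS_symm_neg (α : {α : Fin N // ¬ GammaEven (w α)}) : (eS w).symm α.1 = Sum.inr α :=
  eS_symm_of_neg w α.1 α.2

variable (P : Matrix {α : Fin N // GammaEven (w α)} {α : Fin N // GammaEven (w α)} A)
  (Q : Matrix {α : Fin N // GammaEven (w α)} {α : Fin N // ¬ GammaEven (w α)} A)
  (R : Matrix {α : Fin N // ¬ GammaEven (w α)} {α : Fin N // GammaEven (w α)} A)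
  (S : Matrix {α : Fin N // ¬ GammaEven (w α)} {α : Fin N // ¬ GammaEven (w α)} A)


lemma bigOf_eq_of {P P' : Matrix {α : Fin N // GammaEven (w α)} {α : Fin N // GammaEven (w α)} A}
    {Q Q' : Matrix {α : Fin N // GammaEven (w α)} {α : Fin N // ¬ GammaEven (w α)} A}
    {R R' : Matrix {α : Fin N // ¬ GammaEven (w α)} {α : Fin N // GammaEven (w α)} A}
    {S S' : Matrix {α : Fin N // ¬ GammaEven (w α)} {α : Fin N // ¬ GammaEven (w α)} A}
    (h1 : P = P') (h2 : Q = Q') (h3 : R = R') (h4 : S = S') :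
    bigOf w P Q R S = bigOf w P' Q' R' S' := by
  rw [h1, h2, h3, h4]

lemma blkEE_bigOf : blkEE w (bigOf w P Q R S) = P := by
  ext α β
  show (Matrix.fromBlocks P Q R S).submatrix (eS w).symm (eS w).symm α.1 β.1 = P α β
  rw [Matrix.submatrix_apply, eS_symm_pos w α, eS_symm_pos w β, Matrix.fromBlocks_apply₁₁]

lemma blkEO_bigOf : blkEO w (bigOf w P Q R S) = Q := by
  ext α β
  show (Matrix.fromBlocks P Q R S).submatrix (eS w).symm (eS w).symm α.1 β.1 = Q α β
  rw [Matrix.submatrix_apply, eS_symm_pos w α, eS_symm_neg w β, Matrix.fromBlocks_apply₁₂]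

lemma blkOE_bigOf : blkOE w (bigOf w P Q R S) = R := by
  ext α β
  show (Matrix.fromBlocks P Q R S).submatrix (eS w).symm (eS w).symm α.1 β.1 = R α β
  rw [Matrix.submatrix_apply, eS_symm_neg w α, eS_symm_pos w β, Matrix.fromBlocks_apply₂₁]

lemma blkOO_bigOf : blkOO w (bigOf w P Q R S) = S := by
  ext α β
  show (Matrix.fromBlocks P Q R S).submatrix (eS w).symm (eS w).symm α.1 β.1 = S α β
  rw [Matrix.submatrix_apply, eS_symm_neg w α, eS_symm_neg w β, Matrix.fromBlocks_apply₂₂]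

lemma bigOf_blocks (X : Matrix (Fin N) (Fin N) A) :
    bigOf w (blkEE w X) (blkEO w X) (blkOE w X) (blkOO w X) = X := by
  ext α β
  show (Matrix.fromBlocks _ _ _ _) ((eS w).symm α) ((eS w).symm β) = X α β
  by_cases hα : GammaEven (w α)
  · rw [eS_symm_of_pos w α hα]
    by_cases hβ : GammaEven (w β)
    · rw [eS_symm_of_pos w β hβ, Matrix.fromBlocks_apply₁₁]; rfl
    · rw [eS_symm_of_neg w β hβ, Matrix.fromBlocks_apply₁₂]; rfl
  · rw [eS_symm_of_neg w α hα]
    by_cases hβ : GammaEven (w β)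
    · rw [eS_symm_of_pos w β hβ, Matrix.fromBlocks_apply₂₁]; rfl
    · rw [eS_symm_of_neg w β hβ, Matrix.fromBlocks_apply₂₂]; rfl

lemma bigOf_mul (P' : Matrix {α : Fin N // GammaEven (w α)} {α : Fin N // GammaEven (w α)} A)
    (Q' : Matrix {α : Fin N // GammaEven (w α)} {α : Fin N // ¬ GammaEven (w α)} A)
    (R' : Matrix {α : Fin N // ¬ GammaEven (w α)} {α : Fin N // GammaEven (w α)} A)
    (S' : Matrix {α : Fin N // ¬ GammaEven (w α)} {α : Fin N // ¬ GammaEven (w α)} A) :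
    (bigOf w P Q R S) * (bigOf w P' Q' R' S')
      = bigOf w (P * P' + Q * R') (P * Q' + Q * S') (R * P' + S * R') (R * Q' + S * S') := by
  unfold bigOf
  rw [Matrix.submatrix_mul_equiv, Matrix.fromBlocks_multiply]

lemma bigOf_one : bigOf w 1 0 0 1 = (1 : Matrix (Fin N) (Fin N) A) := by
  unfold bigOf
  rw [Matrix.fromBlocks_one, Matrix.submatrix_one_equiv]

lemma blkEE_one : blkEE w (1 : Matrix (Fin N) (Fin N) A) = 1 := by
  have h := congrArg (blkEE w) (bigOf_one (A := A) w)
  rw [blkEE_bigOf] at h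
  exact h.symm

lemma blkOO_one : blkOO w (1 : Matrix (Fin N) (Fin N) A) = 1 := by
  have h := congrArg (blkOO w) (bigOf_one (A := A) w)
  rw [blkOO_bigOf] at h
  exact h.symm

lemma isUnit_bigOf_upper : IsUnit (bigOf w 1 Q 0 1) := by
  have h1 : (bigOf w 1 Q 0 1) * (bigOf w 1 (-Q) 0 1) = 1 := by
    rw [bigOf_mul]
    have h := bigOf_one (n := n) (N := N) (A := A) w
    convert h using 2 <;> simp
  have h2 : (bigOf w 1 (-Q) 0 1) * (bigOf w 1 Q 0 1) = 1 := by
    rw [bigOf_mul]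
    have h := bigOf_one (n := n) (N := N) (A := A) w
    convert h using 2 <;> simp
  exact isUnit_of_left_right h2 h1

lemma isUnit_bigOf_lower : IsUnit (bigOf w 1 0 R 1) := by
  have h1 : (bigOf w 1 0 R 1) * (bigOf w 1 0 (-R) 1) = 1 := by
    rw [bigOf_mul]
    have h := bigOf_one (n := n) (N := N) (A := A) w
    convert h using 2 <;> simp
  have h2 : (bigOf w 1 0 (-R) 1) * (bigOf w 1 0 R 1) = 1 := by
    rw [bigOf_mul]
    have h := bigOf_one (n := n) (N := N) (A := A) w
    convert h using 2 <;> simp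
  exact isUnit_of_left_right h2 h1

variable (𝒜 : Gamma n → Submodule K A) [GradedAlgebra 𝒜]

lemma Mdeg0_bigOf (hP : ∀ a b, P a b ∈ 𝒜 (w a.1 + w b.1)) (hQ : ∀ a b, Q a b ∈ 𝒜 (w a.1 + w b.1))
    (hR : ∀ a b, R a b ∈ 𝒜 (w a.1 + w b.1)) (hS : ∀ a b, S a b ∈ 𝒜 (w a.1 + w b.1)) :
    Mdeg0 𝒜 w (bigOf w P Q R S) := by
  intro α β
  show (Matrix.fromBlocks P Q R S) ((eS w).symm α) ((eS w).symm β) ∈ _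
  by_cases hα : GammaEven (w α)
  · rw [eS_symm_of_pos w α hα]
    by_cases hβ : GammaEven (w β)
    · rw [eS_symm_of_pos w β hβ, Matrix.fromBlocks_apply₁₁]; exact hP ⟨α, hα⟩ ⟨β, hβ⟩
    · rw [eS_symm_of_neg w β hβ, Matrix.fromBlocks_apply₁₂]; exact hQ ⟨α, hα⟩ ⟨β, hβ⟩
  · rw [eS_symm_of_neg w α hα]
    by_cases hβ : GammaEven (w β)
    · rw [eS_symm_of_pos w β hβ, Matrix.fromBlocks_apply₂₁]; exact hR ⟨α, hα⟩ ⟨β, hβ⟩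
    · rw [eS_symm_of_neg w β hβ, Matrix.fromBlocks_apply₂₂]; exact hS ⟨α, hα⟩ ⟨β, hβ⟩

end BerAux4

/-- **Explicit formula for the graded Berezinian** (Proposition).
If `B` satisfies the graded-Berezinian axioms, then for every invertible `X ∈ M⁰(w)` the
odd–odd block `𝒳₂₂` is invertible, `DO(𝒳₂₂)` is invertible in `A`, the Schur complement
`𝒳₁₁ − 𝒳₁₂ 𝒳₂₂⁻¹ 𝒳₂₁` is a degree-zero graded matrix for `w` restricted to the even
indices, and `B(X) = DE(𝒳₁₁ − 𝒳₁₂ 𝒳₂₂⁻¹ 𝒳₂₁) * (DO(𝒳₂₂))⁻¹`. -/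
theorem graded_ber_formula {n N : ℕ} (hn : 1 ≤ n) (hN : 1 ≤ N)
    {K A : Type*} [Field K] [CharZero K] [Ring A] [Algebra K A]
    (𝒜 : Gamma n → Submodule K A) [GradedAlgebra 𝒜] (hcomm : GradedComm 𝒜)
    (w : Fin N → Gamma n) (lo : LinearOrder (Gamma n))
    (DE : Matrix {α : Fin N // GammaEven (w α)} {α : Fin N // GammaEven (w α)} A → A)
    (DO : Matrix {α : Fin N // ¬ GammaEven (w α)} {α : Fin N // ¬ GammaEven (w α)} A → A)
    (hDE : DetAxioms 𝒜 lo (wE w) DE) (hDO : DetAxioms 𝒜 lo (wO w) DO)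
    (B : Matrix (Fin N) (Fin N) A → A) (hB : BerAxioms 𝒜 w DE DO B) :
    ∀ X : Matrix (Fin N) (Fin N) A, Mdeg0 𝒜 w X → IsUnit X →
      IsUnit (blkOO w X) ∧
      IsUnit (DO (blkOO w X)) ∧
      Mdeg0 𝒜 (wE w) (blkEE w X - blkEO w X * Ring.inverse (blkOO w X) * blkOE w X) ∧
      B X = DE (blkEE w X - blkEO w X * Ring.inverse (blkOO w X) * blkOE w X) *
        Ring.inverse (DO (blkOO w X)) := by
  classical
  obtain ⟨hBmem, hBmul, hBdiag, hBtri⟩ := hB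
  intro X hX hXu
  set X11 := blkEE w X with hX11
  set X12 := blkEO w X with hX12
  set X21 := blkOE w X with hX21
  set X22 := blkOO w X with hX22
  have hX11g : ∀ a b, X11 a b ∈ 𝒜 (w a.1 + w b.1) := fun a b => hX a.1 b.1
  have hX12g : ∀ a b, X12 a b ∈ 𝒜 (w a.1 + w b.1) := fun a b => hX a.1 b.1
  have hX21g : ∀ a b, X21 a b ∈ 𝒜 (w a.1 + w b.1) := fun a b => hX a.1 b.1
  have hX22g : ∀ a b, X22 a b ∈ 𝒜 (w a.1 + w b.1) := fun a b => hX a.1 b.1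
  -- Step 1 : the odd-odd block is invertible
  set Z : Matrix (Fin N) (Fin N) A := Units.val (hXu.unit⁻¹) with hZdef
  have hYZ : X * Z = 1 := hXu.mul_val_inv
  have hZY : Z * X = 1 := hXu.val_inv_mul
  have hXb := bigOf_blocks w X
  have hZb := bigOf_blocks w Z
  have hOO1 : X21 * blkEO w Z + X22 * blkOO w Z = 1 := by
    have h1 : bigOf w (X11 * blkEE w Z + X12 * blkOE w Z) (X11 * blkEO w Z + X12 * blkOO w Z)
        (X21 * blkEE w Z + X22 * blkOE w Z) (X21 * blkEO w Z + X22 * blkOO w Z) = 1 := by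
      rw [← bigOf_mul, hXb, hZb]
      exact hYZ
    have h2 := congrArg (blkOO w) h1
    rwa [blkOO_bigOf, blkOO_one] at h2
  have hOO2 : blkOE w Z * X12 + blkOO w Z * X22 = 1 := by
    have h1 : bigOf w (blkEE w Z * X11 + blkEO w Z * X21) (blkEE w Z * X12 + blkEO w Z * X22)
        (blkOE w Z * X11 + blkOO w Z * X21) (blkOE w Z * X12 + blkOO w Z * X22) = 1 := by
      rw [← bigOf_mul, hXb, hZb]
      exact hZY
    have h2 := congrArg (blkOO w) h1
    rwa [blkOO_bigOf, blkOO_one] at h2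
  set s : Finset A := (Finset.univ.filter
      (fun p : Fin N × Fin N => ¬ (GammaEven (w p.1) ↔ GammaEven (w p.2)))).image
      (fun p => X p.1 p.2) with hs_def
  have hs : ∀ a ∈ s, ∀ x, a * x * a = 0 := by
    intro a ha x
    obtain ⟨p, hp, rfl⟩ := Finset.mem_image.mp ha
    have hp' := (Finset.mem_filter.mp hp).2
    exact odd_conj 𝒜 hcomm (odd_of_ne hp') (hX p.1 p.2) x
  set I : Submodule K A := ∑ a ∈ s, Jd K a with hI_def
  have hJdle : ∀ a ∈ s, Jd K a ≤ I := fun a ha =>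
    Finset.single_le_sum (f := fun a => Jd K a) (fun i _ => subzero_le _) ha
  have hmemI1 : ∀ i j, (X21 * blkEO w Z) i j ∈ I := by
    intro i j
    rw [Matrix.mul_apply]
    refine Submodule.sum_mem _ fun c _ => ?_
    have hmem : X i.1 c.1 ∈ s := Finset.mem_image.mpr ⟨(i.1, c.1),
      Finset.mem_filter.mpr ⟨Finset.mem_univ _, fun hiff => i.2 (hiff.mpr c.2)⟩, rfl⟩
    have hterm : X i.1 c.1 * Z c.1 j.1 ∈ Jd K (X i.1 c.1) := by
      have h := mem_Jd (K := K) (X i.1 c.1) 1 (Z c.1 j.1)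
      rwa [one_mul] at h
    exact hJdle _ hmem hterm
  have hmemI2 : ∀ i j, (blkOE w Z * X12) i j ∈ I := by
    intro i j
    rw [Matrix.mul_apply]
    refine Submodule.sum_mem _ fun c _ => ?_
    have hmem : X c.1 j.1 ∈ s := Finset.mem_image.mpr ⟨(c.1, j.1),
      Finset.mem_filter.mpr ⟨Finset.mem_univ _, fun hiff => j.2 (hiff.mp c.2)⟩, rfl⟩
    have hterm : Z i.1 c.1 * X c.1 j.1 ∈ Jd K (X c.1 j.1) := by
      have h := mem_Jd (K := K) (X c.1 j.1) (Z i.1 c.1) 1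
      rwa [mul_one] at h
    exact hJdle _ hmem hterm
  have hNilI : ∃ m, 1 ≤ m ∧ I ^ m = 0 := sum_Jd_nilpotent (K := K) s hs
  have hnil1 : IsNilpotent (X21 * blkEO w Z) := matrix_nilpotent I hNilI _ hmemI1
  have hnil2 : IsNilpotent (blkOE w Z * X12) := matrix_nilpotent I hNilI _ hmemI2
  have hu1 : IsUnit (X22 * blkOO w Z) := by
    have h : X22 * blkOO w Z = 1 - X21 * blkEO w Z := eq_sub_of_add_eq' hOO1
    rw [h]
    exact IsNilpotent.isUnit_one_sub hnil1
  have hu2 : IsUnit (blkOO w Z * X22) := by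
    have h : blkOO w Z * X22 = 1 - blkOE w Z * X12 := eq_sub_of_add_eq' hOO2
    rw [h]
    exact IsNilpotent.isUnit_one_sub hnil2
  have hX22u : IsUnit X22 := by
    obtain ⟨c, hc⟩ := hu1.exists_right_inv
    obtain ⟨v, hv⟩ := hu2
    refine isUnit_of_left_right (l := Units.val v⁻¹ * blkOO w Z) (r := blkOO w Z * c) ?_ ?_
    · rw [mul_assoc, ← hv]
      exact v.inv_mul
    · rw [← mul_assoc]
      exact hc
  -- Step 2 : the inverse of the odd-odd block and the Schur complement are graded
  set W := Ring.inverse X22 with hW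
  have hW1 : X22 * W = 1 := Ring.mul_inverse_cancel _ hX22u
  have hW2 : W * X22 = 1 := Ring.inverse_mul_cancel _ hX22u
  have hWg : Mdeg0 𝒜 (wO w) W :=
    Mdeg0_ringInverse 𝒜 (wO w) X22 (fun a b => hX a.1 b.1) hX22u
  set S := X11 - X12 * W * X21 with hSdef
  have hX12W : ∀ a b, (X12 * W) a b ∈ 𝒜 (w a.1 + w b.1) :=
    graded_mul 𝒜 (wE w) (wO w) (wO w) hX12g hWg
  have hWX21 : ∀ a b, (W * X21) a b ∈ 𝒜 (w a.1 + w b.1) :=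
    graded_mul 𝒜 (wO w) (wO w) (wE w) hWg hX21g
  have hSg : Mdeg0 𝒜 (wE w) S := by
    intro a b
    rw [hSdef, Matrix.sub_apply]
    exact Submodule.sub_mem _ (hX11g a b)
      (graded_mul 𝒜 (wE w) (wO w) (wE w) hX12W hX21g a b)
  -- Step 3 : UDL decomposition
  set U := bigOf w 1 (X12 * W) 0 1 with hUdef
  set Dm := bigOf w S 0 0 X22 with hDdef
  set L := bigOf w 1 0 (W * X21) 1 with hLdef
  have hDL : Dm * L = bigOf w S 0 X21 X22 := by
    rw [hDdef, hLdef, bigOf_mul]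
    exact bigOf_eq_of w (by simp) (by simp)
      (by rw [Matrix.zero_mul, zero_add, ← Matrix.mul_assoc, hW1, Matrix.one_mul]) (by simp)
  have hXb' : bigOf w X11 X12 X21 X22 = X := bigOf_blocks w X
  have hUDL : U * (Dm * L) = X := by
    rw [hDL, hUdef, bigOf_mul, ← hXb']
    exact bigOf_eq_of w (by rw [one_mul, hSdef]; abel)
      (by rw [Matrix.mul_zero, zero_add, Matrix.mul_assoc, hW2, Matrix.mul_one]) (by simp) (by simp)
  have hUu : IsUnit U := isUnit_bigOf_upper w (X12 * W)
  have hLu : IsUnit L := isUnit_bigOf_lower w (W * X21)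
  have hDmu : IsUnit Dm := by
    obtain ⟨uU, huU⟩ := hUu
    obtain ⟨uL, huL⟩ := hLu
    have h2 : Dm = Units.val uU⁻¹ * X * Units.val uL⁻¹ := by
      calc Dm = Dm * (Units.val uL * Units.val uL⁻¹) := by rw [Units.mul_inv, mul_one]
        _ = (Dm * L) * Units.val uL⁻¹ := by rw [← mul_assoc, huL]
        _ = (Units.val uU⁻¹ * (U * (Dm * L))) * Units.val uL⁻¹ := by
            rw [show Units.val uU⁻¹ * (U * (Dm * L)) = Dm * L by
              rw [← huU, ← mul_assoc, Units.inv_mul, one_mul]]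
        _ = Units.val uU⁻¹ * X * Units.val uL⁻¹ := by rw [hUDL]
    rw [h2]
    exact ((uU⁻¹.isUnit.mul hXu).mul uL⁻¹.isUnit)
  have hUg : Mdeg0 𝒜 w U := by
    rw [hUdef]
    exact Mdeg0_bigOf w _ _ _ _ 𝒜 (Mdeg0_one 𝒜 (wE w)) hX12W
      (fun a b => Submodule.zero_mem _) (Mdeg0_one 𝒜 (wO w))
  have hLg : Mdeg0 𝒜 w L := by
    rw [hLdef]
    exact Mdeg0_bigOf w _ _ _ _ 𝒜 (Mdeg0_one 𝒜 (wE w)) (fun a b => Submodule.zero_mem _)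
      hWX21 (Mdeg0_one 𝒜 (wO w))
  have hDmg : Mdeg0 𝒜 w Dm := by
    rw [hDdef]
    exact Mdeg0_bigOf w _ _ _ _ 𝒜 hSg (fun a b => Submodule.zero_mem _)
      (fun a b => Submodule.zero_mem _) hX22g
  -- Step 4 : apply the Berezinian axioms
  have hDLg : Mdeg0 𝒜 w (Dm * L) := Mdeg0_mul 𝒜 w hDmg hLg
  have hDLu : IsUnit (Dm * L) := hDmu.mul hLu
  have hBX1 : B X = B U * B (Dm * L) := by
    rw [← hUDL]
    exact hBmul U (Dm * L) hUg hUu hDLg hDLu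
  have hBDL : B (Dm * L) = B Dm * B L := hBmul Dm L hDmg hDmu hLg hLu
  have hBU : B U = 1 := by
    refine hBtri U hUg hUu ?_ ?_ (Or.inr ?_)
    · rw [hUdef, blkEE_bigOf]
    · rw [hUdef, blkOO_bigOf]
    · rw [hUdef, blkOE_bigOf]
  have hBL : B L = 1 := by
    refine hBtri L hLg hLu ?_ ?_ (Or.inl ?_)
    · rw [hLdef, blkEE_bigOf]
    · rw [hLdef, blkOO_bigOf]
    · rw [hLdef, blkEO_bigOf]
  have hdiag := hBdiag Dm hDmg hDmu (by rw [hDdef, blkEO_bigOf]) (by rw [hDdef, blkOE_bigOf])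
  have hDOu : IsUnit (DO X22) := by
    have h := hdiag.1
    rwa [hDdef, blkOO_bigOf] at h
  have heq : B Dm * DO X22 = DE S := by
    have h := hdiag.2
    rwa [hDdef, blkOO_bigOf, blkEE_bigOf] at h
  refine ⟨hX22u, hDOu, hSg, ?_⟩
  calc B X = B U * (B Dm * B L) := by rw [hBX1, hBDL]
    _ = B Dm := by rw [hBU, hBL, one_mul, mul_one]
    _ = (B Dm * DO X22) * Ring.inverse (DO X22) := by
        rw [mul_assoc, Ring.mul_inverse_cancel _ hDOu, mul_one]
    _ = DE S * Ring.inverse (DO X22) := by rw [heq]
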